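/- A simple 3-polytope P is flag if and only if P is not the 3-simplex and P does not contain a 3-belt of facets. -/

import Mathlib

/-- An abstract simplicial complex on vertex type `V` (with the empty face included). -/
structure SC (V : Type) where
  faces : Set (Finset V)
  empty_mem : ∅ ∈ faces
  down_closed : ∀ s ∈ faces, ∀ t ⊆ s, t ∈ faces

variable {V : Type}
section Sphere
variable [DecidableEq V]

/-- The degree of a vertex: the number of vertices adjacent to it. Dually, the number
of edges of the facet of the simple 3-polytope corresponding to `v`. -/
noncomputable def SC.vdeg (K : SC V) (v : V) : ℕ :=
  Set.ncard {u | u ≠ v ∧ ({v, u} : Finset V) ∈ K.faces}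

/-- `K` is a simplicial 2-sphere: pure 2-dimensional, every vertex present, each edge in
exactly two triangles, vertex links connected, connected, and Euler characteristic 2.
Dually, the boundary complex of a simple 3-polytope. -/
def IsSphere2 [Fintype V] (K : SC V) : Prop :=
  (∀ v : V, ({v} : Finset V) ∈ K.faces) ∧
  (∀ s ∈ K.faces, s.card ≤ 3) ∧
  (∀ s ∈ K.faces, ∃ t ∈ K.faces, s ⊆ t ∧ t.card = 3) ∧
  (∀ e ∈ K.faces, e.card = 2 → Set.ncard {t | t ∈ K.faces ∧ t.card = 3 ∧ e ⊆ t} = 2) ∧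
  (∀ (v : V) (t t' : Finset V), t ∈ K.faces → t' ∈ K.faces → t.card = 3 → t'.card = 3 →
    v ∈ t → v ∈ t' →
    Relation.ReflTransGen
      (fun a b => a ∈ K.faces ∧ b ∈ K.faces ∧ a.card = 3 ∧ b.card = 3 ∧
        v ∈ a ∧ v ∈ b ∧ (a ∩ b).card = 2) t t') ∧
  (∀ u w : V, Relation.ReflTransGen (fun a b => a ≠ b ∧ ({a, b} : Finset V) ∈ K.faces) u w) ∧
  ((Set.ncard {s | s ∈ K.faces ∧ s.card = 1} : ℤ)
    - (Set.ncard {s | s ∈ K.faces ∧ s.card = 2} : ℤ)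
    + (Set.ncard {s | s ∈ K.faces ∧ s.card = 3} : ℤ) = 2)

/-- `K` is flag: every nonempty collection of pairwise adjacent vertices spans a face.
Dually: every family of pairwise intersecting facets of `P` has a common point. -/
def IsFlag (K : SC V) : Prop :=
  ∀ s : Finset V, s.Nonempty → (∀ u ∈ s, ({u} : Finset V) ∈ K.faces) →
    (∀ u ∈ s, ∀ w ∈ s, u ≠ w → ({u, w} : Finset V) ∈ K.faces) → s ∈ K.faces

/-- A `k`-belt, dually: a chordless cycle `f 0, f 1, …, f (k-1)` in `K` spanning no
2-simplex.  The corresponding facets are pairwise distinct and only consecutive ones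
(in the cyclic order) intersect. -/
def IsBelt (K : SC V) (k : ℕ) (f : ZMod k → V) : Prop :=
  3 ≤ k ∧ Function.Injective f ∧
  (∀ i : ZMod k, ({f i, f (i + 1)} : Finset V) ∈ K.faces) ∧
  (∀ i j : ZMod k, i ≠ j → ({f i, f j} : Finset V) ∈ K.faces → (j = i + 1 ∨ i = j + 1)) ∧
  (∀ i j l : ZMod k, i ≠ j → j ≠ l → i ≠ l → ({f i, f j, f l} : Finset V) ∉ K.faces)

/-- `P` has a `k`-belt of facets. -/
def HasBelt (K : SC V) (k : ℕ) : Prop := ∃ f : ZMod k → V, IsBelt K k f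

/-- `K` is the boundary of the 3-simplex (dually, `P = Δ³`). -/
def IsSimplexBoundary (K : SC V) : Prop :=
  ∃ s : Finset V, s.card = 4 ∧ K.faces = {t | t ⊆ s ∧ t ≠ s}

/-- A Pogorelov polytope: a (simple 3-dimensional) flag polytope without 4-belts,
encoded via its dual simplicial 2-sphere. -/
def IsPogorelov (K : SC V) : Prop := IsFlag K ∧ ¬ HasBelt K 4

/-- The facet corresponding to `v`, having `K.vdeg v` edges, is surrounded by a
`(K.vdeg v)`-belt consisting exactly of the facets adjacent to it. -/
def VertexSurrounded (K : SC V) (v : V) : Prop :=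
  ∃ f : ZMod (K.vdeg v) → V, IsBelt K (K.vdeg v) f ∧
    Set.range f = {u | u ≠ v ∧ ({v, u} : Finset V) ∈ K.faces}

/-- Every 3-cycle of `K` bounds a face (no empty triangles). -/
def NoEmptyTriangle (K : SC V) : Prop :=
  ∀ a b c : V, a ≠ b → b ≠ c → a ≠ c →
    ({a, b} : Finset V) ∈ K.faces → ({b, c} : Finset V) ∈ K.faces →
    ({a, c} : Finset V) ∈ K.faces → ({a, b, c} : Finset V) ∈ K.faces

/-- `K` contains a chordless 4-cycle. -/
def HasChordless4 (K : SC V) : Prop :=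
  ∃ f : ZMod 4 → V, Function.Injective f ∧
    (∀ i : ZMod 4, ({f i, f (i + 1)} : Finset V) ∈ K.faces) ∧
    ({f 0, f 2} : Finset V) ∉ K.faces ∧ ({f 1, f 3} : Finset V) ∉ K.faces

end Sphere

section Aux

variable {V : Type} [DecidableEq V] [Fintype V]

lemma set_eq_pair_of_ncard_two {α : Type*} {S : Set α} (h : S.ncard = 2)
    {a b : α} (ha : a ∈ S) (hb : b ∈ S) (hab : a ≠ b) : S = {a, b} := by
  have hfin : S.Finite := by
    by_contra hinf
    rw [Set.Infinite.ncard hinf] at h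
    omega
  refine (Set.eq_of_subset_of_ncard_le ?_ ?_ hfin).symm
  · intro x hx
    rcases hx with rfl | hx
    · exact ha
    · rcases hx with rfl; exact hb
  · rw [h, Set.ncard_pair hab]

lemma zmod3_cases : ∀ i : ZMod 3, i = 0 ∨ i = 1 ∨ i = 2 := by decide

lemma net_of_no3belt (K : SC V) (hnb : ¬ HasBelt K 3) : NoEmptyTriangle K := by
  intro a b c hab hbc hac hfab hfbc hfac
  by_contra htri
  apply hnb
  set f : ZMod 3 → V := fun i => if i = 0 then a else if i = 1 then b else c with hf
  have h10 : (1 : ZMod 3) ≠ 0 := by decide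
  have h20 : (2 : ZMod 3) ≠ 0 := by decide
  have h21 : (2 : ZMod 3) ≠ 1 := by decide
  have hf0 : f 0 = a := by simp [hf]
  have hf1 : f 1 = b := by simp [hf, h10]
  have hf2 : f 2 = c := by simp [hf, h20, h21]
  refine ⟨f, le_refl 3, ?_, ?_, ?_, ?_⟩
  · intro i j hij
    rcases zmod3_cases i with rfl | rfl | rfl <;> rcases zmod3_cases j with rfl | rfl | rfl <;>
      simp_all
  · intro i
    rcases zmod3_cases i with rfl | rfl | rfl
    · rw [show (0 + 1 : ZMod 3) = 1 from by decide, hf0, hf1]; exact hfab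
    · rw [show (1 + 1 : ZMod 3) = 2 from by decide, hf1, hf2]; exact hfbc
    · rw [show (2 + 1 : ZMod 3) = 0 from by decide, hf2, hf0, Finset.pair_comm]; exact hfac
  · have harith : ∀ i j : ZMod 3, i ≠ j → (j = i + 1 ∨ i = j + 1) := by decide
    exact fun i j hij _ => harith i j hij
  · intro i j l hij hjl hil h
    apply htri
    have heq : ({f i, f j, f l} : Finset V) = {a, b, c} := by
      rcases zmod3_cases i with rfl | rfl | rfl <;> rcases zmod3_cases j with rfl | rfl | rfl <;>
        rcases zmod3_cases l with rfl | rfl | rfl <;>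
        first
          | exact absurd rfl hij
          | exact absurd rfl hjl
          | exact absurd rfl hil
          | (rw [hf0, hf1, hf2]
             ext x
             simp only [Finset.mem_insert, Finset.mem_singleton]
             tauto)
          | (rw [hf0, hf1]; ext x; simp only [Finset.mem_insert, Finset.mem_singleton]; tauto)
          | (rw [hf0, hf2]; ext x; simp only [Finset.mem_insert, Finset.mem_singleton]; tauto)
          | (rw [hf1, hf2]; ext x; simp only [Finset.mem_insert, Finset.mem_singleton]; tauto)
    rwa [heq] at h

lemma simplex_of_four (K : SC V) (hS : IsSphere2 K) (hnb : ¬ HasBelt K 3)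
    {a b c d : V} (hab : a ≠ b) (hac : a ≠ c) (had : a ≠ d) (hbc : b ≠ c)
    (hbd : b ≠ d) (hcd : c ≠ d)
    (hadj : ∀ u ∈ ({a, b, c, d} : Finset V), ∀ w ∈ ({a, b, c, d} : Finset V), u ≠ w →
      ({u, w} : Finset V) ∈ K.faces) : IsSimplexBoundary K := by
  obtain ⟨h1, h2, h3, h4, h5, h6, -⟩ := hS
  have NET : NoEmptyTriangle K := net_of_no3belt K hnb
  set S : Finset V := {a, b, c, d} with hSdef
  have hna : a ∉ ({b, c, d} : Finset V) := by simp [hab, hac, had]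
  have hnb' : b ∉ ({c, d} : Finset V) := by simp [hbc, hbd]
  have hnc : c ∉ ({d} : Finset V) := by simp [hcd]
  have hcard : S.card = 4 := by
    rw [hSdef, Finset.card_insert_of_notMem hna, Finset.card_insert_of_notMem hnb',
      Finset.card_insert_of_notMem hnc, Finset.card_singleton]
  -- every 3-subset of S spans a triangle
  have tri : ∀ x ∈ S, ∀ y ∈ S, ∀ z ∈ S, x ≠ y → y ≠ z → x ≠ z →
      ({x, y, z} : Finset V) ∈ K.faces := by
    intro x hx y hy z hz hxy hyz hxz
    exact NET x y z hxy hyz hxz (hadj x hx y hy hxy) (hadj y hy z hz hyz) (hadj x hx z hz hxz)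
  -- any triangle containing an edge of S is contained in S
  have twoTri : ∀ x ∈ S, ∀ y ∈ S, x ≠ y → ∀ t ∈ K.faces, t.card = 3 →
      x ∈ t → y ∈ t → t ⊆ S := by
    intro x hx y hy hxy t htf ht3 hxt hyt
    have hpair_sub : ({x, y} : Finset V) ⊆ S := by
      intro z hz
      rcases Finset.mem_insert.mp hz with rfl | hz
      · exact hx
      · rw [Finset.mem_singleton] at hz; subst hz; exact hy
    have hdiff : (S \ {x, y}).card = 2 := by
      rw [Finset.card_sdiff_of_subset hpair_sub, hcard, Finset.card_pair hxy]
    obtain ⟨p, q, hpq, hpqeq⟩ := Finset.card_eq_two.mp hdiff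
    have hp : p ∈ S ∧ p ∉ ({x, y} : Finset V) := by
      have : p ∈ S \ {x, y} := by rw [hpqeq]; simp
      exact Finset.mem_sdiff.mp this
    have hq : q ∈ S ∧ q ∉ ({x, y} : Finset V) := by
      have : q ∈ S \ {x, y} := by rw [hpqeq]; simp
      exact Finset.mem_sdiff.mp this
    have hpx : p ≠ x := fun h => hp.2 (by simp [h])
    have hpy : p ≠ y := fun h => hp.2 (by simp [h])
    have hqx : q ≠ x := fun h => hq.2 (by simp [h])
    have hqy : q ≠ y := fun h => hq.2 (by simp [h])
    have ht1 : ({x, y, p} : Finset V) ∈ K.faces := tri x hx y hy p hp.1 hxy hpy.symm hpx.symm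
    have ht2 : ({x, y, q} : Finset V) ∈ K.faces := tri x hx y hy q hq.1 hxy hqy.symm hqx.symm
    have hcard1 : ({x, y, p} : Finset V).card = 3 := by
      rw [Finset.card_insert_of_notMem (by simp [hxy, hpx.symm]),
        Finset.card_insert_of_notMem (by simp [hpy.symm]), Finset.card_singleton]
    have hcard2 : ({x, y, q} : Finset V).card = 3 := by
      rw [Finset.card_insert_of_notMem (by simp [hxy, hqx.symm]),
        Finset.card_insert_of_notMem (by simp [hqy.symm]), Finset.card_singleton]
    have hedge : ({x, y} : Finset V) ∈ K.faces :=
      hadj x hx y hy hxy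
    have hT := h4 {x, y} hedge (Finset.card_pair hxy)
    have hne12 : ({x, y, p} : Finset V) ≠ ({x, y, q} : Finset V) := by
      intro h
      have : p ∈ ({x, y, q} : Finset V) := h ▸ (by simp)
      simp only [Finset.mem_insert, Finset.mem_singleton] at this
      rcases this with h' | h' | h'
      · exact hpx h'
      · exact hpy h'
      · exact hpq h'
    have hmem1 : ({x, y, p} : Finset V) ∈ {t | t ∈ K.faces ∧ t.card = 3 ∧ ({x, y} : Finset V) ⊆ t} :=
      ⟨ht1, hcard1, by intro z hz; simp only [Finset.mem_insert, Finset.mem_singleton] at hz ⊢; tauto⟩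
    have hmem2 : ({x, y, q} : Finset V) ∈ {t | t ∈ K.faces ∧ t.card = 3 ∧ ({x, y} : Finset V) ⊆ t} :=
      ⟨ht2, hcard2, by intro z hz; simp only [Finset.mem_insert, Finset.mem_singleton] at hz ⊢; tauto⟩
    have hTE := set_eq_pair_of_ncard_two hT hmem1 hmem2 hne12
    have htT : t ∈ {t | t ∈ K.faces ∧ t.card = 3 ∧ ({x, y} : Finset V) ⊆ t} := by
      refine ⟨htf, ht3, ?_⟩
      intro z hz
      rcases Finset.mem_insert.mp hz with rfl | hz
      · exact hxt
      · rw [Finset.mem_singleton] at hz; subst hz; exact hyt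
    rw [hTE] at htT
    rcases htT with rfl | rfl
    · intro z hz
      simp only [Finset.mem_insert, Finset.mem_singleton] at hz
      rcases hz with rfl | rfl | rfl
      exacts [hx, hy, hp.1]
    · intro z hz
      simp only [Finset.mem_insert, Finset.mem_singleton] at hz
      rcases hz with rfl | rfl | rfl
      exacts [hx, hy, hq.1]
  -- any triangle containing a vertex of S is contained in S
  have triClosed : ∀ x ∈ S, ∀ t, t ∈ K.faces → t.card = 3 → x ∈ t → t ⊆ S := by
    intro x hx t htf ht3 hxt
    have herase : (S.erase x).card = 3 := by
      rw [Finset.card_erase_of_mem hx, hcard]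
    obtain ⟨p, q, r, hpq, hpr, hqr, heq⟩ := Finset.card_eq_three.mp herase
    have hpS : p ∈ S.erase x := by rw [heq]; simp
    have hqS : q ∈ S.erase x := by rw [heq]; simp
    have hp' := Finset.mem_erase.mp hpS
    have hq' := Finset.mem_erase.mp hqS
    have ht0 : ({x, p, q} : Finset V) ∈ K.faces :=
      tri x hx p hp'.2 q hq'.2 (Ne.symm hp'.1) hpq (Ne.symm hq'.1)
    have ht0card : ({x, p, q} : Finset V).card = 3 := by
      rw [Finset.card_insert_of_notMem (by simp [Ne.symm hp'.1, Ne.symm hq'.1]),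
        Finset.card_insert_of_notMem (by simp [hpq]), Finset.card_singleton]
    have ht0S : ({x, p, q} : Finset V) ⊆ S := by
      intro z hz
      simp only [Finset.mem_insert, Finset.mem_singleton] at hz
      rcases hz with rfl | rfl | rfl
      exacts [hx, hp'.2, hq'.2]
    have hchain := h5 x {x, p, q} t ht0 htf ht0card ht3 (by simp) hxt
    clear hxt ht3 htf
    induction hchain with
    | refl => exact ht0S
    | @tail u w huw hrel ih =>
      have ihu : u ⊆ S := ih
      obtain ⟨huf, hwf, hu3, hw3, hxu, hxw, huw2⟩ := hrel
      obtain ⟨e1, e2, he12, heq'⟩ := Finset.card_eq_two.mp huw2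
      have he1u : e1 ∈ u ∩ w := by rw [heq']; simp
      have he2u : e2 ∈ u ∩ w := by rw [heq']; simp
      have he1S : e1 ∈ S := ihu (Finset.mem_inter.mp he1u).1
      have he2S : e2 ∈ S := ihu (Finset.mem_inter.mp he2u).1
      exact twoTri e1 he1S e2 he2S he12 w hwf hw3
        (Finset.mem_inter.mp he1u).2 (Finset.mem_inter.mp he2u).2
  -- every vertex lies in S
  have vertexS : ∀ v : V, v ∈ S := by
    intro v
    have key : ∀ w, Relation.ReflTransGen
        (fun a b => a ≠ b ∧ ({a, b} : Finset V) ∈ K.faces) a w → w ∈ S := by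
      intro w hw
      induction hw with
      | refl => simp [hSdef]
      | @tail u w' huw hrel ih =>
        obtain ⟨hne, hedge⟩ := hrel
        obtain ⟨t, htf, hsub, ht3⟩ := h3 {u, w'} hedge
        have hut : u ∈ t := hsub (by simp)
        have htS : t ⊆ S := triClosed u ih t htf ht3 hut
        exact htS (hsub (by simp))
    exact key v (h6 a v)
  refine ⟨S, hcard, ?_⟩
  ext t
  constructor
  · intro ht
    refine ⟨fun v _ => vertexS v, ?_⟩
    intro h
    have := h2 t ht
    rw [h, hcard] at this
    omega
  · rintro ⟨hts, htns⟩
    have hlt : t.card < 4 := by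
      rw [← hcard]
      exact Finset.card_lt_card (Finset.ssubset_iff_subset_ne.mpr ⟨hts, htns⟩)
    obtain ⟨u, htu, huS, hu3⟩ := Finset.exists_subsuperset_card_eq hts
      (show t.card ≤ 3 by omega) (show 3 ≤ S.card by rw [hcard]; omega)
    obtain ⟨p, q, r, hpq, hpr, hqr, hueq⟩ := Finset.card_eq_three.mp hu3
    have huf : u ∈ K.faces := by
      rw [hueq]
      exact tri p (huS (by rw [hueq]; simp)) q (huS (by rw [hueq]; simp))
        r (huS (by rw [hueq]; simp)) hpq hqr hpr
    exact K.down_closed u huf t htu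

end Aux
/-- A simple 3-polytope `P` (encoded by its dual simplicial 2-sphere `K`) is flag
if and only if `P ≠ Δ³` and `P` has no 3-belt of facets. -/
theorem stmt4 {V : Type} [DecidableEq V] [Fintype V] (K : SC V) (hS : IsSphere2 K) :
    IsFlag K ↔ (¬ IsSimplexBoundary K ∧ ¬ HasBelt K 3) := by
  constructor
  · intro hflag
    constructor
    · rintro ⟨s, hs4, hfe⟩
      have hsne : s.Nonempty := by
        rw [← Finset.card_pos, hs4]; omega
      have hs : s ∈ K.faces := by
        refine hflag s hsne (fun u _ => hS.1 u) ?_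
        intro u hu w hw huw
        rw [hfe]
        refine ⟨?_, ?_⟩
        · intro x hx
          simp only [Finset.mem_insert, Finset.mem_singleton] at hx
          rcases hx with rfl | rfl
          exacts [hu, hw]
        · intro h
          have := congrArg Finset.card h
          rw [Finset.card_pair huw, hs4] at this
          omega
      rw [hfe] at hs
      exact hs.2 rfl
    · rintro ⟨f, -, hinj, hedge, -, hno⟩
      have h01 : f 0 ≠ f 1 := fun h => absurd (hinj h) (by decide)
      have h12 : f 1 ≠ f 2 := fun h => absurd (hinj h) (by decide)
      have h02 : f 0 ≠ f 2 := fun h => absurd (hinj h) (by decide)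
      have e01 : ({f 0, f 1} : Finset V) ∈ K.faces := by
        have := hedge 0; rwa [show (0 + 1 : ZMod 3) = 1 from by decide] at this
      have e12 : ({f 1, f 2} : Finset V) ∈ K.faces := by
        have := hedge 1; rwa [show (1 + 1 : ZMod 3) = 2 from by decide] at this
      have e02 : ({f 0, f 2} : Finset V) ∈ K.faces := by
        have := hedge 2
        rwa [show (2 + 1 : ZMod 3) = 0 from by decide, Finset.pair_comm] at this
      have hmem : ({f 0, f 1, f 2} : Finset V) ∈ K.faces := by
        refine hflag _ ⟨f 0, by simp⟩ (fun u _ => hS.1 u) ?_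
        intro u hu w hw huw
        simp only [Finset.mem_insert, Finset.mem_singleton] at hu hw
        rcases hu with rfl | rfl | rfl <;> rcases hw with rfl | rfl | rfl <;>
          first
            | exact absurd rfl huw
            | assumption
            | (rw [Finset.pair_comm]; assumption)
      exact hno 0 1 2 (by decide) (by decide) (by decide) hmem
  · rintro ⟨hnsb, hnb⟩ s hne hsing hpair
    by_cases hbig : 4 ≤ s.card
    · exfalso
      apply hnsb
      obtain ⟨u, hus, hu4⟩ := Finset.exists_subset_card_eq hbig
      obtain ⟨a, hau⟩ : u.Nonempty := by rw [← Finset.card_pos, hu4]; omega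
      have herase : (u.erase a).card = 3 := by rw [Finset.card_erase_of_mem hau, hu4]
      obtain ⟨b, c, d, hbc, hbd, hcd, heq⟩ := Finset.card_eq_three.mp herase
      have hb : b ∈ u.erase a := by rw [heq]; simp
      have hc : c ∈ u.erase a := by rw [heq]; simp
      have hd : d ∈ u.erase a := by rw [heq]; simp
      have hab : a ≠ b := (Finset.mem_erase.mp hb).1.symm
      have hac : a ≠ c := (Finset.mem_erase.mp hc).1.symm
      have had : a ≠ d := (Finset.mem_erase.mp hd).1.symm
      have has' : a ∈ s := hus hau
      have hbs : b ∈ s := hus (Finset.mem_of_mem_erase hb)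
      have hcs : c ∈ s := hus (Finset.mem_of_mem_erase hc)
      have hds : d ∈ s := hus (Finset.mem_of_mem_erase hd)
      refine simplex_of_four K hS hnb hab hac had hbc hbd hcd ?_
      intro x hx y hy hxy
      have hxs : x ∈ s := by
        simp only [Finset.mem_insert, Finset.mem_singleton] at hx
        rcases hx with rfl | rfl | rfl | rfl <;> assumption
      have hys : y ∈ s := by
        simp only [Finset.mem_insert, Finset.mem_singleton] at hy
        rcases hy with rfl | rfl | rfl | rfl <;> assumption
      exact hpair x hxs y hys hxy
    · push_neg at hbig
      have hpos : 1 ≤ s.card := Finset.card_pos.mpr hne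
      interval_cases h : s.card
      · obtain ⟨a, ha⟩ := Finset.card_eq_one.mp h
        subst ha
        exact hsing a (by simp)
      · obtain ⟨a, b, hab, hab'⟩ := Finset.card_eq_two.mp h
        subst hab'
        exact hpair a (by simp) b (by simp) hab
      · obtain ⟨a, b, c, hab, hac, hbc, habc⟩ := Finset.card_eq_three.mp h
        subst habc
        exact net_of_no3belt K hnb a b c hab hbc hac
          (hpair a (by simp) b (by simp) hab)
          (hpair b (by simp) c (by simp) hbc)
          (hpair a (by simp) c (by simp) hac)
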